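/- Let 1 < μ ≤ 2 and ω > 0. For any bounded measurable y : [0,1] → ℝ with |y(τ)| ≤ M for all τ, the family of functions x(t) := ∫_0^1 G(t,τ) y(τ) dτ is uniformly bounded by M · E_{μ,μ}(ω) and is equicontinuous on [0,1] (with modulus of continuity depending only on M, μ, ω). -/

import Mathlib

open Real

/-- Two-parameter Mittag-Leffler function `E_{μ,ν}(t) = ∑ t^k / Γ(μk + ν)`. -/
noncomputable def mittagLeffler (μ ν t : ℝ) : ℝ :=
  ∑' k : ℕ, t ^ k / Real.Gamma (μ * k + ν)

/-- Green's function of the BVP `ᶜD^μ x + y = ω x`, `x'(0) = 0`, `x(1) = 0`. -/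
noncomputable def greenG (μ ω t τ : ℝ) : ℝ :=
  mittagLeffler μ 1 (ω * t ^ μ) / mittagLeffler μ 1 ω *
      ((1 - τ) ^ (μ - 1) * mittagLeffler μ μ (ω * (1 - τ) ^ μ)) -
    (if τ ≤ t then (t - τ) ^ (μ - 1) * mittagLeffler μ μ (ω * (t - τ) ^ μ) else 0)

lemma ml_summable {μ ν : ℝ} (hμ : 1 < μ) (hν : 1 ≤ ν) (t : ℝ) :
    Summable (fun k : ℕ => t ^ k / Real.Gamma (μ * k + ν)) := by
  apply Summable.of_norm_bounded_eventually (g := fun k : ℕ => |t| ^ k / (k.factorial : ℝ))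
    (Real.summable_pow_div_factorial |t|)
  rw [Nat.cofinite_eq_atTop]
  filter_upwards [Filter.eventually_ge_atTop 1] with k hk
  have hk1 : (1:ℝ) ≤ (k:ℝ) := by exact_mod_cast hk
  have h2 : (2:ℝ) ≤ (k:ℝ) + 1 := by linarith
  have hle : (k:ℝ) + 1 ≤ μ * k + ν := by
    have : (k:ℝ) ≤ μ * k := le_mul_of_one_le_left (Nat.cast_nonneg k) hμ.le
    linarith
  have hΓ : (k.factorial : ℝ) ≤ Real.Gamma (μ * k + ν) := by
    have := Real.Gamma_strictMonoOn_Ici.monotoneOn (Set.mem_Ici.2 h2)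
      (Set.mem_Ici.2 (le_trans h2 hle)) hle
    rwa [Real.Gamma_nat_eq_factorial] at this
  have hΓpos : (0:ℝ) < Real.Gamma (μ * k + ν) :=
    lt_of_lt_of_le (by exact_mod_cast k.factorial_pos) hΓ
  have hfac : (0:ℝ) < (k.factorial : ℝ) := by exact_mod_cast k.factorial_pos
  rw [Real.norm_eq_abs, abs_div, abs_pow, abs_of_pos hΓpos]
  gcongr

lemma ml_nonneg {μ ν : ℝ} (hμ : 1 < μ) (hν : 1 ≤ ν) {t : ℝ} (ht : 0 ≤ t) :
    0 ≤ mittagLeffler μ ν t := by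
  apply tsum_nonneg
  intro k
  have hΓ : 0 < Real.Gamma (μ * k + ν) :=
    Real.Gamma_pos_of_pos (by positivity)
  positivity

lemma ml_mono {μ ν : ℝ} (hμ : 1 < μ) (hν : 1 ≤ ν) {a b : ℝ} (ha : 0 ≤ a) (hab : a ≤ b) :
    mittagLeffler μ ν a ≤ mittagLeffler μ ν b := by
  apply Summable.tsum_le_tsum _ (ml_summable hμ hν a) (ml_summable hμ hν b)
  intro k
  have hΓ : 0 < Real.Gamma (μ * k + ν) :=
    Real.Gamma_pos_of_pos (by positivity)
  gcongr

lemma ml_one_pos {μ : ℝ} (hμ : 1 < μ) {t : ℝ} (ht : 0 ≤ t) :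
    0 < mittagLeffler μ 1 t := by
  have h0 : (1:ℝ) ≤ mittagLeffler μ 1 t := by
    have := Summable.le_tsum (ml_summable hμ le_rfl t) 0 (fun j _ => by
      have hΓ : 0 < Real.Gamma (μ * j + 1) := Real.Gamma_pos_of_pos (by positivity)
      positivity)
    simpa [mittagLeffler, Real.Gamma_one] using this
  linarith

lemma ml_continuous {μ ν : ℝ} (hμ : 1 < μ) (hν : 1 ≤ ν) :
    Continuous (mittagLeffler μ ν) := by
  rw [continuous_iff_continuousAt]
  intro x
  have hc : ContinuousOn (mittagLeffler μ ν) (Metric.ball x 1) := by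
    have : ContinuousOn (fun t : ℝ => ∑' k : ℕ, t ^ k / Real.Gamma (μ * k + ν))
        (Metric.ball x 1) := by
      apply continuousOn_tsum (u := fun k : ℕ => (|x| + 1) ^ k / Real.Gamma (μ * k + ν))
      · intro i
        exact ((continuous_pow i).div_const _).continuousOn
      · exact ml_summable hμ hν (|x| + 1)
      · intro n t ht
        have hΓ : 0 < Real.Gamma (μ * n + ν) := Real.Gamma_pos_of_pos (by positivity)
        have h1 : |t| ≤ |x| + 1 := by
          have h2 : |t| - |x| ≤ |t - x| := abs_sub_abs_le_abs_sub t x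
          have h3 : |t - x| < 1 := by
            rw [Metric.mem_ball, Real.dist_eq] at ht; exact ht
          linarith
        rw [Real.norm_eq_abs, abs_div, abs_pow, abs_of_pos hΓ]
        gcongr
    exact this
  exact hc.continuousAt (Metric.ball_mem_nhds x one_pos)

lemma cont_rpow {c : ℝ} (h : 0 ≤ c) : Continuous fun s : ℝ => s ^ c := by
  rw [continuous_iff_continuousAt]
  intro s
  exact Real.continuousAt_rpow_const s c (Or.inr h)

lemma greenG_eq {μ : ℝ} (hμ : 1 < μ) (ω t τ : ℝ) :
    greenG μ ω t τ = mittagLeffler μ 1 (ω * t ^ μ) / mittagLeffler μ 1 ω *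
      ((1 - τ) ^ (μ - 1) * mittagLeffler μ μ (ω * (1 - τ) ^ μ)) -
      (max (t - τ) 0) ^ (μ - 1) * mittagLeffler μ μ (ω * (max (t - τ) 0) ^ μ) := by
  unfold greenG
  rcases le_or_gt τ t with h | h
  · rw [if_pos h, max_eq_left (sub_nonneg.2 h)]
  · rw [if_neg (not_le.2 h), max_eq_right (sub_nonpos.2 h.le),
      Real.zero_rpow (by intro hc; linarith [hc] : μ - 1 ≠ 0), zero_mul]

lemma greenG_continuous {μ ω : ℝ} (hμ : 1 < μ) :
    Continuous fun p : ℝ × ℝ => greenG μ ω p.1 p.2 := by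
  have hμ0 : (0:ℝ) ≤ μ := by linarith
  have hμ1 : (0:ℝ) ≤ μ - 1 := by linarith
  have hk : Continuous fun s : ℝ => s ^ (μ - 1) * mittagLeffler μ μ (ω * s ^ μ) :=
    (cont_rpow hμ1).mul ((ml_continuous hμ hμ.le).comp (continuous_const.mul (cont_rpow hμ0)))
  have hc : Continuous fun t : ℝ => mittagLeffler μ 1 (ω * t ^ μ) / mittagLeffler μ 1 ω :=
    ((ml_continuous hμ le_rfl).comp (continuous_const.mul (cont_rpow hμ0))).div_const _
  have heq : (fun p : ℝ × ℝ => greenG μ ω p.1 p.2) =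
      fun p : ℝ × ℝ => (mittagLeffler μ 1 (ω * p.1 ^ μ) / mittagLeffler μ 1 ω) *
        ((1 - p.2) ^ (μ - 1) * mittagLeffler μ μ (ω * (1 - p.2) ^ μ)) -
        (max (p.1 - p.2) 0) ^ (μ - 1) * mittagLeffler μ μ (ω * (max (p.1 - p.2) 0) ^ μ) := by
    funext p
    exact greenG_eq hμ ω p.1 p.2
  rw [heq]
  exact ((hc.comp continuous_fst).mul
      (hk.comp (continuous_const.sub continuous_snd))).sub
    (hk.comp ((continuous_fst.sub continuous_snd).max continuous_const))

lemma kernel_bound {μ ω : ℝ} (hμ : 1 < μ) (hω : 0 < ω) {s : ℝ} (hs : s ∈ Set.Icc (0:ℝ) 1) :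
    0 ≤ s ^ (μ - 1) * mittagLeffler μ μ (ω * s ^ μ) ∧
      s ^ (μ - 1) * mittagLeffler μ μ (ω * s ^ μ) ≤ mittagLeffler μ μ ω := by
  obtain ⟨hs0, hs1⟩ := hs
  have hr0 : 0 ≤ s ^ (μ - 1) := Real.rpow_nonneg hs0 _
  have hr1 : s ^ (μ - 1) ≤ 1 := Real.rpow_le_one hs0 hs1 (by linarith)
  have hsp0 : 0 ≤ s ^ μ := Real.rpow_nonneg hs0 _
  have hsp1 : s ^ μ ≤ 1 := Real.rpow_le_one hs0 hs1 (by linarith)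
  have harg0 : 0 ≤ ω * s ^ μ := by positivity
  have harg1 : ω * s ^ μ ≤ ω := by nlinarith
  have hml0 : 0 ≤ mittagLeffler μ μ (ω * s ^ μ) := ml_nonneg hμ hμ.le harg0
  have hml1 : mittagLeffler μ μ (ω * s ^ μ) ≤ mittagLeffler μ μ ω :=
    ml_mono hμ hμ.le harg0 harg1
  constructor
  · positivity
  · calc s ^ (μ - 1) * mittagLeffler μ μ (ω * s ^ μ)
        ≤ 1 * mittagLeffler μ μ (ω * s ^ μ) := by gcongr
      _ = mittagLeffler μ μ (ω * s ^ μ) := one_mul _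
      _ ≤ mittagLeffler μ μ ω := hml1

lemma abs_greenG_le {μ ω : ℝ} (hμ : 1 < μ) (hω : 0 < ω) {t τ : ℝ}
    (ht : t ∈ Set.Icc (0:ℝ) 1) (hτ : τ ∈ Set.Icc (0:ℝ) 1) :
    |greenG μ ω t τ| ≤ mittagLeffler μ μ ω := by
  obtain ⟨ht0, ht1⟩ := ht
  obtain ⟨hτ0, hτ1⟩ := hτ
  set A := mittagLeffler μ 1 (ω * t ^ μ) / mittagLeffler μ 1 ω *
      ((1 - τ) ^ (μ - 1) * mittagLeffler μ μ (ω * (1 - τ) ^ μ)) with hA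
  set B := (if τ ≤ t then (t - τ) ^ (μ - 1) * mittagLeffler μ μ (ω * (t - τ) ^ μ) else 0) with hB
  have hEω : mittagLeffler μ 1 ω > 0 := ml_one_pos hμ hω.le
  have htp0 : 0 ≤ t ^ μ := Real.rpow_nonneg ht0 _
  have htp1 : t ^ μ ≤ 1 := Real.rpow_le_one ht0 ht1 (by linarith)
  have hnum0 : 0 ≤ mittagLeffler μ 1 (ω * t ^ μ) := ml_nonneg hμ le_rfl (by positivity)
  have hnum1 : mittagLeffler μ 1 (ω * t ^ μ) ≤ mittagLeffler μ 1 ω :=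
    ml_mono hμ le_rfl (by positivity) (by nlinarith)
  have hrat0 : 0 ≤ mittagLeffler μ 1 (ω * t ^ μ) / mittagLeffler μ 1 ω := by positivity
  have hrat1 : mittagLeffler μ 1 (ω * t ^ μ) / mittagLeffler μ 1 ω ≤ 1 :=
    (div_le_one hEω).2 hnum1
  have hker := kernel_bound hμ hω (s := 1 - τ) ⟨by linarith, by linarith⟩
  have hA0 : 0 ≤ A := mul_nonneg hrat0 hker.1
  have hA1 : A ≤ mittagLeffler μ μ ω := by
    calc A ≤ 1 * ((1 - τ) ^ (μ - 1) * mittagLeffler μ μ (ω * (1 - τ) ^ μ)) := by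
          rw [hA]; gcongr; exact hker.1
      _ = (1 - τ) ^ (μ - 1) * mittagLeffler μ μ (ω * (1 - τ) ^ μ) := one_mul _
      _ ≤ mittagLeffler μ μ ω := hker.2
  have hB0 : 0 ≤ B := by
    rw [hB]
    split_ifs with h
    · exact (kernel_bound hμ hω (s := t - τ) ⟨by linarith, by linarith⟩).1
    · exact le_refl 0
  have hB1 : B ≤ mittagLeffler μ μ ω := by
    rw [hB]
    split_ifs with h
    · exact (kernel_bound hμ hω (s := t - τ) ⟨by linarith, by linarith⟩).2
    · exact ml_nonneg hμ hμ.le hω.le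
  have hgAB : greenG μ ω t τ = A - B := rfl
  rw [hgAB]
  rw [abs_le]
  constructor <;> linarith
lemma greenG_mul_intervalIntegrable {μ ω M : ℝ} (hμ : 1 < μ) (hω : 0 < ω)
    {y : ℝ → ℝ} (hy : Measurable y) (hyM : ∀ τ, |y τ| ≤ M) {t : ℝ}
    (ht : t ∈ Set.Icc (0:ℝ) 1) :
    IntervalIntegrable (fun τ => greenG μ ω t τ * y τ) MeasureTheory.volume 0 1 := by
  rw [intervalIntegrable_iff_integrableOn_Ioc_of_le (by norm_num : (0:ℝ) ≤ 1)]
  have hmeas : Measurable fun τ => greenG μ ω t τ * y τ :=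
    (((greenG_continuous (ω := ω) hμ).comp (Continuous.prodMk_right t)).measurable).mul hy
  apply MeasureTheory.Integrable.mono' (g := fun _ => mittagLeffler μ μ ω * M)
    (MeasureTheory.integrableOn_const measure_Ioc_lt_top.ne)
    hmeas.aestronglyMeasurable
  rw [MeasureTheory.ae_restrict_iff' measurableSet_Ioc]
  refine MeasureTheory.ae_of_all _ (fun τ hτ => ?_)
  rw [Real.norm_eq_abs, abs_mul]
  exact mul_le_mul (abs_greenG_le hμ hω ht ⟨hτ.1.le, hτ.2⟩) (hyM τ) (abs_nonneg _)
    (ml_nonneg hμ hμ.le hω.le)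

/-- For bounded measurable `y` with `|y| ≤ M`, the functions
`x(t) = ∫_0^1 G(t,τ) y(τ) dτ` are uniformly bounded by `M · E_{μ,μ}(ω)` and
equicontinuous on `[0,1]`, with a modulus depending only on `M`, `μ`, `ω`. -/
theorem greenG_uniform_bound_equicontinuous (μ ω M : ℝ) (hμ1 : 1 < μ)
    (hμ2 : μ ≤ 2) (hω : 0 < ω) (hM : 0 ≤ M) :
    (∀ y : ℝ → ℝ, Measurable y → (∀ τ, |y τ| ≤ M) →
      ∀ t ∈ Set.Icc (0 : ℝ) 1,
        |∫ τ in (0 : ℝ)..1, greenG μ ω t τ * y τ| ≤ M * mittagLeffler μ μ ω) ∧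
    (∀ ε > (0 : ℝ), ∃ δ > (0 : ℝ), ∀ y : ℝ → ℝ, Measurable y →
      (∀ τ, |y τ| ≤ M) → ∀ t₁ ∈ Set.Icc (0 : ℝ) 1, ∀ t₂ ∈ Set.Icc (0 : ℝ) 1,
        |t₁ - t₂| < δ →
          |(∫ τ in (0 : ℝ)..1, greenG μ ω t₁ τ * y τ) -
              ∫ τ in (0 : ℝ)..1, greenG μ ω t₂ τ * y τ| < ε) := by
  constructor
  · intro y hy hyM t ht
    have hb : ∀ τ ∈ Set.uIoc (0:ℝ) 1, ‖greenG μ ω t τ * y τ‖ ≤ M * mittagLeffler μ μ ω := by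
      intro τ hτ
      rw [Set.uIoc_of_le (by norm_num : (0:ℝ) ≤ 1)] at hτ
      rw [Real.norm_eq_abs, abs_mul, mul_comm]
      exact mul_le_mul (hyM τ) (abs_greenG_le hμ1 hω ht ⟨hτ.1.le, hτ.2⟩) (abs_nonneg _) hM
    have := intervalIntegral.norm_integral_le_of_norm_le_const hb
    simpa using this
  · intro ε hε
    have hM1 : (0:ℝ) < M + 1 := by linarith
    set ε' : ℝ := ε / (M + 1) with hε'def
    have hε' : 0 < ε' := by positivity
    have hcomp : IsCompact (Set.Icc (0:ℝ) 1 ×ˢ Set.Icc (0:ℝ) 1) :=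
      isCompact_Icc.prod isCompact_Icc
    have hUC := hcomp.uniformContinuousOn_of_continuous
      (greenG_continuous (ω := ω) hμ1).continuousOn
    rw [Metric.uniformContinuousOn_iff] at hUC
    obtain ⟨δ, hδ, hδ'⟩ := hUC ε' hε'
    refine ⟨δ, hδ, ?_⟩
    intro y hy hyM t₁ ht₁ t₂ ht₂ hd
    have hint1 := greenG_mul_intervalIntegrable hμ1 hω hy hyM ht₁
    have hint2 := greenG_mul_intervalIntegrable hμ1 hω hy hyM ht₂
    rw [← intervalIntegral.integral_sub hint1 hint2]
    have hb : ∀ τ ∈ Set.uIoc (0:ℝ) 1,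
        ‖greenG μ ω t₁ τ * y τ - greenG μ ω t₂ τ * y τ‖ ≤ ε' * M := by
      intro τ hτ
      rw [Set.uIoc_of_le (by norm_num : (0:ℝ) ≤ 1)] at hτ
      have hτ' : τ ∈ Set.Icc (0:ℝ) 1 := ⟨hτ.1.le, hτ.2⟩
      have hp : ((t₁, τ) : ℝ × ℝ) ∈ Set.Icc (0:ℝ) 1 ×ˢ Set.Icc (0:ℝ) 1 :=
        Set.mk_mem_prod ht₁ hτ'
      have hq : ((t₂, τ) : ℝ × ℝ) ∈ Set.Icc (0:ℝ) 1 ×ˢ Set.Icc (0:ℝ) 1 :=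
        Set.mk_mem_prod ht₂ hτ'
      have hdist : dist ((t₁, τ) : ℝ × ℝ) ((t₂, τ) : ℝ × ℝ) < δ := by
        rw [Prod.dist_eq]
        simp only [dist_self]
        rw [max_eq_left dist_nonneg, Real.dist_eq]
        exact hd
      have hGG := hδ' _ hp _ hq hdist
      rw [Real.dist_eq] at hGG
      rw [← sub_mul, Real.norm_eq_abs, abs_mul]
      exact mul_le_mul hGG.le (hyM τ) (abs_nonneg _) hε'.le
    have hnorm := intervalIntegral.norm_integral_le_of_norm_le_const hb
    have h1 : ε' * M < ε := by
      have h2 : ε' * M < ε' * (M + 1) := by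
        exact mul_lt_mul_of_pos_left (by linarith) hε'
      have h3 : ε' * (M + 1) = ε := by
        rw [hε'def]
        field_simp
      linarith
    calc |(∫ τ in (0:ℝ)..1, (greenG μ ω t₁ τ * y τ - greenG μ ω t₂ τ * y τ))|
        ≤ ε' * M * |(1:ℝ) - 0| := hnorm
      _ = ε' * M := by norm_num
      _ < ε := h1
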